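/- For all positive integers n, m, r with n ≥ m·r, the number of partitions of an n-element set into exactly m blocks, each of size at least r, is at least m^n / m^(m·r) and at most m^n / m!. -/
import Mathlib


/-- The `r`-associated Stirling number: the number of partitions of `{1,...,n}`
(modelled as `Fin n`) into exactly `m` blocks, each of size at least `r`. -/
noncomputable def stirlingGe (n m r : ℕ) : ℕ :=
  Set.ncard {P : Finset (Finset (Fin n)) |
    P.card = m ∧ (∀ b ∈ P, r ≤ b.card) ∧ ∀ x : Fin n, ∃! b, b ∈ P ∧ x ∈ b}

namespace StirlingGeAux

open Classical

/-- The set of good partitions. -/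
def good (n m r : ℕ) : Set (Finset (Finset (Fin n))) :=
  {P : Finset (Finset (Fin n)) |
    P.card = m ∧ (∀ b ∈ P, r ≤ b.card) ∧ ∀ x : Fin n, ∃! b, b ∈ P ∧ x ∈ b}

/-- The fiber of a function as a Finset. -/
noncomputable def fib {n m : ℕ} (f : Fin n → Fin m) (i : Fin m) : Finset (Fin n) :=
  Finset.univ.filter (fun x => f x = i)

lemma mem_fib {n m : ℕ} (f : Fin n → Fin m) (i : Fin m) (x : Fin n) :
    x ∈ fib f i ↔ f x = i := by simp [fib]

section Lower

variable {n m r : ℕ}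

/-- Fill: extend `g` on the tail by a fixed base assignment on the first `m*r` elements. -/
noncomputable def fill (hr : 0 < r) (h : m * r ≤ n) (g : Fin (n - m * r) → Fin m)
    (x : Fin n) : Fin m :=
  if hx : x.val < m * r then ⟨x.val / r, (Nat.div_lt_iff_lt_mul hr).2 hx⟩
  else g ⟨x.val - m * r, by have := x.isLt; omega⟩

lemma fill_base (hr : 0 < r) (h : m * r ≤ n) (g : Fin (n - m * r) → Fin m)
    (x : Fin n) (hx : x.val < m * r) :
    fill hr h g x = ⟨x.val / r, (Nat.div_lt_iff_lt_mul hr).2 hx⟩ := by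
  simp [fill, hx]

lemma fill_tail (hr : 0 < r) (h : m * r ≤ n) (g : Fin (n - m * r) → Fin m)
    (x : Fin n) (hx : ¬ x.val < m * r) :
    fill hr h g x = g ⟨x.val - m * r, by have := x.isLt; omega⟩ := by
  simp [fill, hx]

/-- The base element of block `i`. -/
noncomputable def base (hr : 0 < r) (h : m * r ≤ n) (i : Fin m) (t : Fin r) : Fin n :=
  ⟨i.val * r + t.val, by
    have : i.val * r + t.val < (i.val + 1) * r := by
      have := t.isLt; nlinarith
    have : (i.val + 1) * r ≤ m * r := Nat.mul_le_mul_right r i.isLt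
    omega⟩

lemma fill_base_elt (hr : 0 < r) (h : m * r ≤ n) (g : Fin (n - m * r) → Fin m)
    (i : Fin m) (t : Fin r) : fill hr h g (base hr h i t) = i := by
  have hlt : (base hr h i t).val < m * r := by
    have h1 : i.val * r + t.val < (i.val + 1) * r := by have := t.isLt; nlinarith
    have h2 : (i.val + 1) * r ≤ m * r := Nat.mul_le_mul_right r i.isLt
    simp only [base]; omega
  rw [fill_base hr h g _ hlt]
  apply Fin.ext
  simp only [base]
  rw [Nat.add_comm, Nat.add_mul_div_right _ _ hr, Nat.div_eq_of_lt t.isLt]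
  simp

/-- The partition associated to a fill. -/
noncomputable def fillPart (hr : 0 < r) (h : m * r ≤ n)
    (g : Fin (n - m * r) → Fin m) : Finset (Finset (Fin n)) :=
  Finset.univ.image (fib (fill hr h g))

lemma fib_fill_inj (hr : 0 < r) (h : m * r ≤ n) (g : Fin (n - m * r) → Fin m) :
    Function.Injective (fib (fill hr h g)) := by
  intro i j hij
  have h0 : 0 < r := hr
  have hmem : base hr h i ⟨0, h0⟩ ∈ fib (fill hr h g) i := by
    rw [mem_fib]; exact fill_base_elt hr h g i _
  rw [hij, mem_fib] at hmem
  rw [← hmem, fill_base_elt hr h g i _]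

lemma fillPart_mem (hr : 0 < r) (h : m * r ≤ n) (g : Fin (n - m * r) → Fin m) :
    fillPart hr h g ∈ good n m r := by
  refine ⟨?_, ?_, ?_⟩
  · rw [fillPart, Finset.card_image_of_injective _ (fib_fill_inj hr h g),
      Finset.card_univ, Fintype.card_fin]
  · intro b hb
    rw [fillPart, Finset.mem_image] at hb
    obtain ⟨i, -, rfl⟩ := hb
    have : Finset.univ.image (base hr h i) ⊆ fib (fill hr h g) i := by
      intro x hx
      rw [Finset.mem_image] at hx
      obtain ⟨t, -, rfl⟩ := hx
      rw [mem_fib]; exact fill_base_elt hr h g i t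
    calc r = (Finset.univ.image (base hr h i)).card := by
            rw [Finset.card_image_of_injective, Finset.card_univ, Fintype.card_fin]
            intro t s hts
            apply Fin.ext
            have : i.val * r + t.val = i.val * r + s.val := congrArg Fin.val hts
            omega
      _ ≤ _ := Finset.card_le_card this
  · intro x
    refine ⟨fib (fill hr h g) (fill hr h g x), ⟨?_, ?_⟩, ?_⟩
    · rw [fillPart]; exact Finset.mem_image_of_mem _ (Finset.mem_univ _)
    · rw [mem_fib]
    · rintro b ⟨hb, hxb⟩
      rw [fillPart, Finset.mem_image] at hb
      obtain ⟨j, -, rfl⟩ := hb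
      rw [mem_fib] at hxb
      rw [hxb]

lemma fillPart_inj (hr : 0 < r) (h : m * r ≤ n) :
    Function.Injective (fillPart hr h) := by
  intro g g' hgg
  funext x
  set y : Fin n := ⟨m * r + x.val, by have := x.isLt; omega⟩ with hy
  have hyt : ¬ y.val < m * r := by simp [hy]
  have hgy : fill hr h g y = g x := by
    rw [fill_tail hr h g y hyt]; congr 1; apply Fin.ext; simp [hy]
  have hg'y : fill hr h g' y = g' x := by
    rw [fill_tail hr h g' y hyt]; congr 1; apply Fin.ext; simp [hy]
  -- the fiber of g at value (g x) is in both partitions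
  have hmem : fib (fill hr h g) (g x) ∈ fillPart hr h g' := by
    rw [← hgg, fillPart]; exact Finset.mem_image_of_mem _ (Finset.mem_univ _)
  rw [fillPart, Finset.mem_image] at hmem
  obtain ⟨j, -, hj⟩ := hmem
  -- the base element of block (g x) is in this fiber
  have hb : base hr h (g x) ⟨0, hr⟩ ∈ fib (fill hr h g) (g x) := by
    rw [mem_fib]; exact fill_base_elt hr h g _ _
  rw [← hj, mem_fib, fill_base_elt hr h g' _ _] at hb
  -- so j = g x
  subst hb
  -- y is in the fiber
  have hyf : y ∈ fib (fill hr h g) (g x) := by rw [mem_fib, hgy]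
  rw [← hj, mem_fib, hg'y] at hyf
  exact hyf.symm

lemma lower (hr : 0 < r) (hm : 0 < m) (h : m * r ≤ n) :
    m ^ (n - m * r) ≤ Nat.card (good n m r) := by
  classical
  have : Function.Injective (fun g : Fin (n - m * r) → Fin m =>
      (⟨fillPart hr h g, fillPart_mem hr h g⟩ : good n m r)) := by
    intro g g' hgg
    exact fillPart_inj hr h (congrArg Subtype.val hgg)
  have hle := Nat.card_le_card_of_injective _ this
  simpa [Nat.card_eq_fintype_card] using hle

end Lower

section Upper

variable {n m r : ℕ}

/-- The block containing `x`. -/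
noncomputable def blk (P : good n m r) (x : Fin n) : Finset (Fin n) :=
  (P.2.2.2 x).exists.choose

lemma blk_mem (P : good n m r) (x : Fin n) : blk P x ∈ P.1 :=
  (P.2.2.2 x).exists.choose_spec.1

lemma mem_blk (P : good n m r) (x : Fin n) : x ∈ blk P x :=
  (P.2.2.2 x).exists.choose_spec.2

lemma blk_unique (P : good n m r) (x : Fin n) {b : Finset (Fin n)}
    (hb : b ∈ P.1) (hx : x ∈ b) : b = blk P x :=
  (P.2.2.2 x).unique ⟨hb, hx⟩ ⟨blk_mem P x, mem_blk P x⟩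

/-- Index equivalence for a good partition. -/
noncomputable def idx (P : good n m r) : {b // b ∈ P.1} ≃ Fin m :=
  P.1.equivFin.trans (finCongr P.2.1)

/-- The labelled function of a partition and a permutation. -/
noncomputable def lab (P : good n m r) (σ : Equiv.Perm (Fin m)) (x : Fin n) : Fin m :=
  σ (idx P ⟨blk P x, blk_mem P x⟩)

lemma fib_lab (P : good n m r) (σ : Equiv.Perm (Fin m)) {b : Finset (Fin n)}
    (hb : b ∈ P.1) : fib (lab P σ) (σ (idx P ⟨b, hb⟩)) = b := by
  ext x
  rw [mem_fib, lab]
  constructor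
  · intro hx
    have h1 : idx P ⟨blk P x, blk_mem P x⟩ = idx P ⟨b, hb⟩ := σ.injective hx
    have h2 : (⟨blk P x, blk_mem P x⟩ : {b // b ∈ P.1}) = ⟨b, hb⟩ :=
      (idx P).injective h1
    have h3 : blk P x = b := congrArg Subtype.val h2
    rw [← h3]; exact mem_blk P x
  · intro hx
    have : b = blk P x := blk_unique P x hb hx
    subst this
    rfl

lemma mem_iff_fib (P : good n m r) (σ : Equiv.Perm (Fin m)) (b : Finset (Fin n)) :
    b ∈ P.1 ↔ ∃ i : Fin m, fib (lab P σ) i = b := by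
  constructor
  · intro hb
    exact ⟨σ (idx P ⟨b, hb⟩), fib_lab P σ hb⟩
  · rintro ⟨i, rfl⟩
    set s := (idx P).symm (σ.symm i) with hs
    have h1 : σ (idx P s) = i := by simp [hs]
    have h2 : fib (lab P σ) i = s.1 := by rw [← h1]; exact fib_lab P σ s.2
    rw [h2]; exact s.2

lemma lab_inj : Function.Injective
    (fun Pσ : good n m r × Equiv.Perm (Fin m) => lab Pσ.1 Pσ.2) := by
  rintro ⟨P, σ⟩ ⟨Q, τ⟩ hf
  simp only at hf
  have hPQ : P = Q := by
    apply Subtype.ext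
    ext b
    rw [mem_iff_fib P σ b, mem_iff_fib Q τ b, hf]
  subst hPQ
  simp only [Prod.mk.injEq, true_and]
  -- now show σ = τ
  have key : ∀ (ρ : Equiv.Perm (Fin m)) (i : Fin m),
      fib (lab P ρ) i = ((idx P).symm (ρ.symm i)).1 := by
    intro ρ i
    set s := (idx P).symm (ρ.symm i) with hs
    have h1 : ρ (idx P s) = i := by simp [hs]
    calc fib (lab P ρ) i = fib (lab P ρ) (ρ (idx P s)) := by rw [h1]
      _ = s.1 := fib_lab P ρ s.2
  have hsymm : Equiv.symm σ = Equiv.symm τ := by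
    apply Equiv.ext
    intro i
    have h1 := key σ i
    have h2 := key τ i
    rw [hf] at h1
    exact (idx P).symm.injective (Subtype.ext (h1.symm.trans h2))
  have := congrArg Equiv.symm hsymm
  simpa using this

lemma upper : Nat.card (good n m r) * m.factorial ≤ m ^ n := by
  classical
  have hle := Nat.card_le_card_of_injective _ (lab_inj (n := n) (m := m) (r := r))
  rw [Nat.card_eq_fintype_card (α := Fin n → Fin m)] at hle
  simp only [Fintype.card_fun, Fintype.card_fin] at hle
  calc Nat.card (good n m r) * m.factorial
      = Nat.card (good n m r × Equiv.Perm (Fin m)) := by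
        rw [Nat.card_prod, Nat.card_eq_fintype_card (α := Equiv.Perm (Fin m)),
          Fintype.card_perm, Fintype.card_fin]
    _ ≤ m ^ n := hle

end Upper

end StirlingGeAux

theorem stmt_0 (n m r : ℕ) (hn : 0 < n) (hm : 0 < m) (hr : 0 < r)
    (h : m * r ≤ n) :
    (m : ℝ) ^ n / (m : ℝ) ^ (m * r) ≤ (stirlingGe n m r : ℝ) ∧
      (stirlingGe n m r : ℝ) ≤ (m : ℝ) ^ n / (Nat.factorial m : ℝ) := by
  have hS : stirlingGe n m r = Nat.card (StirlingGeAux.good n m r) := by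
    rw [stirlingGe, ← Nat.card_coe_set_eq]
    rfl
  have hlow := StirlingGeAux.lower hr hm h
  have hup := StirlingGeAux.upper (n := n) (m := m) (r := r)
  have hmR : (0 : ℝ) < (m : ℝ) := by exact_mod_cast hm
  constructor
  · rw [div_le_iff₀ (by positivity)]
    have hnat : m ^ n ≤ Nat.card (StirlingGeAux.good n m r) * m ^ (m * r) := by
      calc m ^ n = m ^ (n - m * r) * m ^ (m * r) := by
            rw [← pow_add]; congr 1; omega
        _ ≤ _ := Nat.mul_le_mul_right _ hlow
    rw [hS]
    exact_mod_cast hnat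
  · rw [le_div_iff₀ (by exact_mod_cast Nat.factorial_pos m)]
    rw [hS]
    exact_mod_cast hup
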